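/- Let (a,b) be a fictitious-play trajectory. Then for every T ≥ 5, the final radius satisfies ρ_T ≤ 2·√(10T). -/
import Mathlib


open MeasureTheory

/-- Bob's choice of the left or right piece. -/
inductive Choice
  | L
  | R
deriving DecidableEq

/-- The cumulative valuation `V(x) = ∫_0^x v`. -/
noncomputable def cumul (v : ℝ → ℝ) (x : ℝ) : ℝ := ∫ y in (0:ℝ)..x, v y

/-- `v` is an integrable value density on `[0,1]`, bounded between `lo` and `hi`,
integrating to `1`. -/
def IsDensity (lo hi : ℝ) (v : ℝ → ℝ) : Prop :=
  IntervalIntegrable v volume 0 1 ∧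
  (∀ x ∈ Set.Icc (0:ℝ) 1, lo ≤ v x ∧ v x ≤ hi) ∧
  (∫ y in (0:ℝ)..1, v y) = 1

/-- Alice's round-`t` utility: if Bob picks `L` she gets `[a_t,1]`, else `[0,a_t]`. -/
noncomputable def uA (vA : ℝ → ℝ) (a : ℕ → ℝ) (b : ℕ → Choice) (t : ℕ) : ℝ :=
  if b t = Choice.L then 1 - cumul vA (a t) else cumul vA (a t)

/-- Bob's round-`t` utility: if he picks `L` he gets `[0,a_t]`, else `[a_t,1]`. -/
noncomputable def uB (vB : ℝ → ℝ) (a : ℕ → ℝ) (b : ℕ → Choice) (t : ℕ) : ℝ :=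
  if b t = Choice.L then cumul vB (a t) else 1 - cumul vB (a t)

/-- `α_t = r_t − ℓ_t`: number of `R` choices minus number of `L` choices up to round `t`. -/
noncomputable def alphaFP (b : ℕ → Choice) (t : ℕ) : ℝ :=
  ∑ i ∈ Finset.Icc 1 t, (if b i = Choice.R then (1:ℝ) else -1)

/-- `β_t = Σ_{i=1}^t (2 V_B(a_i) − 1)`. -/
noncomputable def betaFP (vB : ℝ → ℝ) (a : ℕ → ℝ) (t : ℕ) : ℝ :=
  ∑ i ∈ Finset.Icc 1 t, (2 * cumul vB (a i) - 1)

/-- The radius `ρ_t = |α_t| + |β_t|`. -/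
noncomputable def rhoFP (vB : ℝ → ℝ) (a : ℕ → ℝ) (b : ℕ → Choice) (t : ℕ) : ℝ :=
  |alphaFP b t| + |betaFP vB a t|

/-- `(a,b)` is a fictitious-play trajectory. -/
def IsFictitiousPlay (vB : ℝ → ℝ) (a : ℕ → ℝ) (b : ℕ → Choice) : Prop :=
  ∀ t : ℕ,
    (0 < alphaFP b t → a (t+1) = 1) ∧
    (alphaFP b t < 0 → a (t+1) = 0) ∧
    (0 < betaFP vB a t → b (t+1) = Choice.L) ∧
    (betaFP vB a t < 0 → b (t+1) = Choice.R)

/-- Round `t` is axis-crossing. -/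
def AxisCrossing (vB : ℝ → ℝ) (a : ℕ → ℝ) (b : ℕ → Choice) (t : ℕ) : Prop :=
  alphaFP b t = 0 ∨
  (betaFP vB a t ≤ 0 ∧ 0 < betaFP vB a (t+1)) ∨
  (0 ≤ betaFP vB a t ∧ betaFP vB a (t+1) < 0)

namespace RadiusAux

structure Sys where
  A : ℕ → ℝ
  B : ℕ → ℝ
  hA0 : A 0 = 0
  hB0 : B 0 = 0
  hint : ∀ t, ∃ n : ℤ, A t = (n : ℝ)
  hstepA : ∀ t, A (t + 1) = A t + 1 ∨ A (t + 1) = A t - 1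
  hstepB : ∀ t, |B (t + 1) - B t| ≤ 1
  hp : ∀ t, 0 < A t → B (t + 1) = B t + 1
  hn : ∀ t, A t < 0 → B (t + 1) = B t - 1
  hbp : ∀ t, 0 < B t → A (t + 1) = A t - 1
  hbn : ∀ t, B t < 0 → A (t + 1) = A t + 1

namespace Sys

variable (S : Sys)

noncomputable def rho (t : ℕ) : ℝ := |S.A t| + |S.B t|

def Cr (t : ℕ) : Prop :=
  S.A t = 0 ∨ (S.B t ≤ 0 ∧ 0 < S.B (t + 1)) ∨ (0 ≤ S.B t ∧ S.B (t + 1) < 0)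

lemma stepA_abs (t : ℕ) : |S.A (t + 1) - S.A t| ≤ 1 := by
  rcases S.hstepA t with h | h <;> rw [h] <;> simp

lemma one_le_of_pos {t : ℕ} (h : 0 < S.A t) : 1 ≤ S.A t := by
  obtain ⟨n, hn⟩ := S.hint t
  rw [hn] at h ⊢
  have h' : 0 < n := by exact_mod_cast h
  exact_mod_cast h'

lemma le_neg_one_of_neg {t : ℕ} (h : S.A t < 0) : S.A t ≤ -1 := by
  obtain ⟨n, hn⟩ := S.hint t
  rw [hn] at h ⊢
  have h' : n < 0 := by exact_mod_cast h
  have : n ≤ -1 := by omega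
  exact_mod_cast this

lemma lipA : ∀ (k t : ℕ), |S.A (t + k) - S.A t| ≤ k := by
  intro k
  induction k with
  | zero => simp
  | succ n ih =>
    intro t
    have h1 := ih t
    have h2 := S.stepA_abs (t + n)
    have h3 := abs_sub_le (S.A (t + (n+1))) (S.A (t + n)) (S.A t)
    have he : t + (n + 1) = (t + n) + 1 := rfl
    rw [he] at h3 ⊢
    push_cast
    linarith

lemma lipB : ∀ (k t : ℕ), |S.B (t + k) - S.B t| ≤ k := by
  intro k
  induction k with
  | zero => simp
  | succ n ih =>
    intro t
    have h1 := ih t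
    have h2 := S.hstepB (t + n)
    have h3 := abs_sub_le (S.B (t + (n+1))) (S.B (t + n)) (S.B t)
    have he : t + (n + 1) = (t + n) + 1 := rfl
    rw [he] at h3 ⊢
    push_cast
    linarith

lemma rho_step (t : ℕ) : S.rho (t + 1) ≤ S.rho t + 2 := by
  have h1 : |S.A (t+1)| - |S.A t| ≤ |S.A (t+1) - S.A t| := abs_sub_abs_le_abs_sub _ _
  have h2 : |S.B (t+1)| - |S.B t| ≤ |S.B (t+1) - S.B t| := abs_sub_abs_le_abs_sub _ _
  have h3 := S.stepA_abs t
  have h4 := S.hstepB t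
  unfold rho
  linarith

lemma rho_eq_of_not_cr {t : ℕ} (h : ¬ S.Cr t) : S.rho (t + 1) = S.rho t := by
  have h1 : S.A t ≠ 0 := fun hh => h (Or.inl hh)
  have h2 : ¬ (S.B t ≤ 0 ∧ 0 < S.B (t + 1)) := fun hh => h (Or.inr (Or.inl hh))
  have h3 : ¬ (0 ≤ S.B t ∧ S.B (t + 1) < 0) := fun hh => h (Or.inr (Or.inr hh))
  unfold rho
  rcases lt_trichotomy (S.A t) 0 with hA | hA | hA
  · -- A t < 0
    have hA1 : S.A t ≤ -1 := S.le_neg_one_of_neg hA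
    have hB' : S.B (t + 1) = S.B t - 1 := S.hn t hA
    rcases lt_trichotomy (S.B t) 0 with hBt | hBt | hBt
    · have hA' : S.A (t + 1) = S.A t + 1 := S.hbn t hBt
      rw [hA', hB', abs_of_nonpos (by linarith), abs_of_nonpos (by linarith),
        abs_of_nonpos hA.le, abs_of_nonpos hBt.le]
      ring
    · exact absurd ⟨hBt.ge, by rw [hB', hBt]; norm_num⟩ h3
    · have hA' : S.A (t + 1) = S.A t - 1 := S.hbp t hBt
      have hB1 : 0 ≤ S.B (t + 1) := by
        by_contra hc
        exact h3 ⟨hBt.le, not_le.mp hc⟩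
      rw [hA', hB', abs_of_nonpos (by linarith), abs_of_nonneg (by linarith [hB'] : (0:ℝ) ≤ S.B t - 1),
        abs_of_nonpos hA.le, abs_of_nonneg hBt.le]
      ring
  · exact absurd hA h1
  · -- 0 < A t
    have hA1 : 1 ≤ S.A t := S.one_le_of_pos hA
    have hB' : S.B (t + 1) = S.B t + 1 := S.hp t hA
    rcases lt_trichotomy (S.B t) 0 with hBt | hBt | hBt
    · have hA' : S.A (t + 1) = S.A t + 1 := S.hbn t hBt
      have hB1 : S.B (t + 1) ≤ 0 := by
        by_contra hc
        exact h2 ⟨hBt.le, not_le.mp hc⟩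
      rw [hA', hB', abs_of_nonneg (by linarith), abs_of_nonpos (by linarith [hB'] : S.B t + 1 ≤ 0),
        abs_of_nonneg hA.le, abs_of_nonpos hBt.le]
      ring
    · exact absurd ⟨hBt.le, by rw [hB', hBt]; norm_num⟩ h2
    · have hA' : S.A (t + 1) = S.A t - 1 := S.hbp t hBt
      rw [hA', hB', abs_of_nonneg (by linarith), abs_of_nonneg (by linarith),
        abs_of_nonneg hA.le, abs_of_nonneg hBt.le]
      ring

lemma runB_pos (t m : ℕ) (h : ∀ k, k ≤ m → 0 < S.A (t + k)) :
    ∀ k, k ≤ m + 1 → S.B (t + k) = S.B t + k := by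
  intro k
  induction k with
  | zero => simp
  | succ k ih =>
    intro hk
    have h1 : S.B (t + k + 1) = S.B (t + k) + 1 := S.hp _ (h k (by omega))
    have h2 := ih (by omega)
    have he : t + (k + 1) = (t + k) + 1 := rfl
    rw [he, h1, h2]
    push_cast
    ring

lemma runB_neg (t m : ℕ) (h : ∀ k, k ≤ m → S.A (t + k) < 0) :
    ∀ k, k ≤ m + 1 → S.B (t + k) = S.B t - k := by
  intro k
  induction k with
  | zero => simp
  | succ k ih =>
    intro hk
    have h1 : S.B (t + k + 1) = S.B (t + k) - 1 := S.hn _ (h k (by omega))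
    have h2 := ih (by omega)
    have he : t + (k + 1) = (t + k) + 1 := rfl
    rw [he, h1, h2]
    push_cast
    ring

lemma runA_dec (t m : ℕ) (h : ∀ k, k ≤ m → 0 < S.B (t + k)) :
    ∀ k, k ≤ m + 1 → S.A (t + k) = S.A t - k := by
  intro k
  induction k with
  | zero => simp
  | succ k ih =>
    intro hk
    have h1 : S.A (t + k + 1) = S.A (t + k) - 1 := S.hbp _ (h k (by omega))
    have h2 := ih (by omega)
    have he : t + (k + 1) = (t + k) + 1 := rfl
    rw [he, h1, h2]
    push_cast
    ring

lemma runA_inc (t m : ℕ) (h : ∀ k, k ≤ m → S.B (t + k) < 0) :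
    ∀ k, k ≤ m + 1 → S.A (t + k) = S.A t + k := by
  intro k
  induction k with
  | zero => simp
  | succ k ih =>
    intro hk
    have h1 : S.A (t + k + 1) = S.A (t + k) + 1 := S.hbn _ (h k (by omega))
    have h2 := ih (by omega)
    have he : t + (k + 1) = (t + k) + 1 := rfl
    rw [he, h1, h2]
    push_cast
    ring

lemma gap (t t' : ℕ) (htt : t < t') (hct : S.Cr t) (hct' : S.Cr t') :
    S.rho (t + 1) - 3 ≤ (t' : ℝ) - t := by
  by_contra hcon
  push_neg at hcon
  obtain ⟨g, hg1, rfl⟩ : ∃ g, 1 ≤ g ∧ t' = t + g := ⟨t' - t, by omega, by omega⟩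
  have hgR : ((t + g : ℕ) : ℝ) - t = g := by push_cast; ring
  rw [hgR] at hcon
  have hg1R : (1 : ℝ) ≤ g := by exact_mod_cast hg1
  set r := S.rho (t + 1) with hr
  have hr4 : 4 < r := by linarith
  have hrdef : r = |S.A (t + 1)| + |S.B (t + 1)| := rfl
  have hstB := abs_le.mp (S.hstepB t)
  have hsmall : |S.A (t + 1)| ≤ 1 ∨ |S.B (t + 1)| ≤ 1 := by
    rcases hct with h0 | hup | hdn
    · left; rcases S.hstepA t with h | h <;> rw [h, h0] <;> simp
    · right; rw [abs_le]; constructor <;> linarith [hup.1, hup.2]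
    · right; rw [abs_le]; constructor <;> linarith [hdn.1, hdn.2]
  rcases hsmall with hAs | hBs
  · -- |A (t+1)| ≤ 1, so |B (t+1)| ≥ r - 1
    have hBbig : r - 1 ≤ |S.B (t + 1)| := by linarith [abs_nonneg (S.A (t+1))]
    rcases le_abs.mp hBbig with hBp | hBn
    · -- r - 1 ≤ B (t+1)
      have hBk : ∀ k, k ≤ g → 2 < S.B (t + k) := by
        intro k hk
        match k with
        | 0 => simpa using (by linarith [hstB.1, hstB.2] : 2 < S.B t)
        | (k+1) =>
          have hl := abs_le.mp (S.lipB k (t + 1))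
          have he : t + 1 + k = t + (k + 1) := by omega
          rw [he] at hl
          have hkg : (k : ℝ) ≤ (g : ℝ) - 1 := by
            have : (k + 1 : ℕ) ≤ g := hk
            have := Nat.cast_le (α := ℝ).mpr this
            push_cast at this
            linarith
          linarith [hl.1, hl.2]
      have hAk : ∀ k, k ≤ g → S.A (t + k) = S.A t - k := by
        have := S.runA_dec t (g - 1) (fun k hk => by linarith [hBk k (by omega : k ≤ g)])
        intro k hk
        exact this k (by omega)
      have hBt : 0 < S.B t := by have := hBk 0 (by omega); simpa using (by linarith : (0:ℝ) < S.B (t + 0))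
      have hBt1 : 0 < S.B (t + 1) := by linarith
      have hAt : S.A t = 0 := by
        rcases hct with h | h | h
        · exact h
        · linarith [h.1]
        · linarith [h.2]
      have hAg : S.A (t + g) = -(g : ℝ) := by rw [hAk g le_rfl, hAt]; ring
      have hBg : 2 < S.B (t + g) := hBk g le_rfl
      have hBg1 : 0 < S.B (t + g + 1) := by
        have := abs_le.mp (S.hstepB (t + g)); linarith [this.1]
      rcases hct' with h | h | h
      · rw [hAg] at h; have : (g : ℝ) = 0 := by linarith
        have : g = 0 := by exact_mod_cast this
        omega
      · exact absurd h.1 (not_le.mpr (by linarith))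
      · exact absurd h.2 (not_lt.mpr hBg1.le)
    · -- r - 1 ≤ -B (t+1)
      have hBk : ∀ k, k ≤ g → S.B (t + k) < -2 := by
        intro k hk
        match k with
        | 0 => simpa using (by linarith [hstB.1, hstB.2] : S.B t < -2)
        | (k+1) =>
          have hl := abs_le.mp (S.lipB k (t + 1))
          have he : t + 1 + k = t + (k + 1) := by omega
          rw [he] at hl
          have hkg : (k : ℝ) ≤ (g : ℝ) - 1 := by
            have : (k + 1 : ℕ) ≤ g := hk
            have := Nat.cast_le (α := ℝ).mpr this
            push_cast at this
            linarith
          linarith [hl.1, hl.2]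
      have hAk : ∀ k, k ≤ g → S.A (t + k) = S.A t + k := by
        have := S.runA_inc t (g - 1) (fun k hk => by linarith [hBk k (by omega : k ≤ g)])
        intro k hk
        exact this k (by omega)
      have hBt : S.B t < 0 := by have := hBk 0 (by omega); simpa using (by linarith : S.B (t + 0) < 0)
      have hBt1 : S.B (t + 1) < 0 := by linarith
      have hAt : S.A t = 0 := by
        rcases hct with h | h | h
        · exact h
        · linarith [h.2]
        · linarith [h.1]
      have hAg : S.A (t + g) = (g : ℝ) := by rw [hAk g le_rfl, hAt]; ring
      have hBg : S.B (t + g) < -2 := hBk g le_rfl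
      have hBg1 : S.B (t + g + 1) < 0 := by
        have := abs_le.mp (S.hstepB (t + g)); linarith [this.2]
      rcases hct' with h | h | h
      · rw [hAg] at h
        have : g = 0 := by exact_mod_cast h
        omega
      · exact absurd h.2 (not_lt.mpr hBg1.le)
      · exact absurd h.1 (not_le.mpr (by linarith))
  · -- |B (t+1)| ≤ 1, so |A (t+1)| ≥ r - 1
    have hAbig : r - 1 ≤ |S.A (t + 1)| := by linarith [abs_nonneg (S.B (t+1))]
    have hstA := abs_le.mp (S.stepA_abs t)
    rcases le_abs.mp hAbig with hAp | hAn
    · -- r - 1 ≤ A (t+1)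
      have hAk : ∀ k, k ≤ g → 2 < S.A (t + k) := by
        intro k hk
        match k with
        | 0 => simpa using (by linarith [hstA.1, hstA.2] : 2 < S.A t)
        | (k+1) =>
          have hl := abs_le.mp (S.lipA k (t + 1))
          have he : t + 1 + k = t + (k + 1) := by omega
          rw [he] at hl
          have hkg : (k : ℝ) ≤ (g : ℝ) - 1 := by
            have : (k + 1 : ℕ) ≤ g := hk
            have := Nat.cast_le (α := ℝ).mpr this
            push_cast at this
            linarith
          linarith [hl.1, hl.2]
      have hBk : ∀ k, k ≤ g + 1 → S.B (t + k) = S.B t + k :=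
        S.runB_pos t g (fun k hk => by linarith [hAk k hk])
      have hB1 : S.B (t + 1) = S.B t + 1 := by simpa using hBk 1 (by omega)
      have hup : S.B t ≤ 0 ∧ 0 < S.B (t + 1) := by
        rcases hct with h | h | h
        · exact absurd h (by have := hAk 0 (by omega); simp at this; linarith)
        · exact h
        · exact absurd h.2 (not_lt.mpr (by linarith [h.1]))
      have hBtg : S.B (t + g) = S.B t + g := hBk g (by omega)
      have hBtg1 : S.B (t + g + 1) = S.B t + (g + 1) := by
        have := hBk (g + 1) le_rfl
        rw [show t + (g + 1) = t + g + 1 from rfl] at this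
        rw [this]; push_cast; ring
      have hBtlb : -1 < S.B t := by linarith [hup.2]
      rcases hct' with h | h | h
      · exact absurd h (by have := hAk g le_rfl; linarith)
      · exact absurd h.1 (not_le.mpr (by rw [hBtg]; linarith))
      · exact absurd h.2 (not_lt.mpr (by rw [hBtg1]; linarith))
    · -- r - 1 ≤ -A (t+1)
      have hAk : ∀ k, k ≤ g → S.A (t + k) < -2 := by
        intro k hk
        match k with
        | 0 => simpa using (by linarith [hstA.1, hstA.2] : S.A t < -2)
        | (k+1) =>
          have hl := abs_le.mp (S.lipA k (t + 1))
          have he : t + 1 + k = t + (k + 1) := by omega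
          rw [he] at hl
          have hkg : (k : ℝ) ≤ (g : ℝ) - 1 := by
            have : (k + 1 : ℕ) ≤ g := hk
            have := Nat.cast_le (α := ℝ).mpr this
            push_cast at this
            linarith
          linarith [hl.1, hl.2]
      have hBk : ∀ k, k ≤ g + 1 → S.B (t + k) = S.B t - k :=
        S.runB_neg t g (fun k hk => by linarith [hAk k hk])
      have hB1 : S.B (t + 1) = S.B t - 1 := by simpa using hBk 1 (by omega)
      have hdn : 0 ≤ S.B t ∧ S.B (t + 1) < 0 := by
        rcases hct with h | h | h
        · exact absurd h (by have := hAk 0 (by omega); simp at this; linarith)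
        · exact absurd h.2 (not_lt.mpr (by linarith [h.1]))
        · exact h
      have hBtg : S.B (t + g) = S.B t - g := hBk g (by omega)
      have hBtg1 : S.B (t + g + 1) = S.B t - (g + 1) := by
        have := hBk (g + 1) le_rfl
        rw [show t + (g + 1) = t + g + 1 from rfl] at this
        rw [this]; push_cast; ring
      have hBtub : S.B t < 1 := by linarith [hdn.2]
      rcases hct' with h | h | h
      · exact absurd h (by have := hAk g le_rfl; linarith)
      · exact absurd h.2 (not_lt.mpr (by rw [hBtg1]; linarith))
      · exact absurd h.1 (not_le.mpr (by rw [hBtg]; linarith))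
lemma gapSum : ∀ (n : ℕ) (K : Finset ℕ) (G : ℝ), 0 ≤ G → K.card = n →
    (∀ u ∈ K, ∀ v ∈ K, u < v → G ≤ (v : ℝ) - u) →
    ∀ (h : K.Nonempty), ((n : ℝ) - 1) * G ≤ (K.max' h : ℝ) - (K.min' h : ℝ) := by
  intro n
  induction n with
  | zero =>
    intro K G hG hc hgap h
    exact absurd hc (by simpa [Finset.card_eq_zero] using h.ne_empty)
  | succ n ih =>
    intro K G hG hc hgap h
    rcases Nat.eq_zero_or_pos n with rfl | hn
    · have h1 : K.min' h ≤ K.max' h := K.min'_le _ (K.max'_mem h)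
      have h2 : ((K.min' h : ℕ) : ℝ) ≤ ((K.max' h : ℕ) : ℝ) := by exact_mod_cast h1
      push_cast
      nlinarith
    · set M := K.max' h with hM
      have hMK : M ∈ K := K.max'_mem h
      set K' := K.erase M with hK'
      have hc' : K'.card = n := by
        rw [hK', Finset.card_erase_of_mem hMK, hc]
        omega
      have h' : K'.Nonempty := Finset.card_pos.mp (by rw [hc']; exact hn)
      set M' := K'.max' h' with hM'
      have hM'K' : M' ∈ K' := K'.max'_mem h'
      have hM'K : M' ∈ K := Finset.mem_of_mem_erase hM'K'
      have hM'M : M' < M :=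
        lt_of_le_of_ne (K.le_max' M' hM'K) (Finset.ne_of_mem_erase hM'K')
      have hgap' : ∀ u ∈ K', ∀ v ∈ K', u < v → G ≤ (v : ℝ) - u :=
        fun u hu v hv huv =>
          hgap u (Finset.mem_of_mem_erase hu) v (Finset.mem_of_mem_erase hv) huv
      have hIH := ih K' G hG hc' hgap' h'
      have hstep := hgap M' hM'K M hMK hM'M
      have hmin : (K.min' h : ℝ) ≤ (K'.min' h' : ℝ) := by
        exact_mod_cast K.min'_le _ (Finset.mem_of_mem_erase (K'.min'_mem h'))
      have hcast : (((n + 1 : ℕ) : ℝ) - 1) * G = ((n : ℝ) - 1) * G + G := by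
        push_cast; ring
      rw [hcast]
      linarith

lemma main (T : ℕ) (hT : 5 ≤ T) : S.rho T ≤ 2 * Real.sqrt (10 * T) := by
  by_contra hcon
  push_neg at hcon
  set R := S.rho T with hR
  have hsqrt0 : (0 : ℝ) ≤ Real.sqrt (10 * T) := Real.sqrt_nonneg _
  have hsq : Real.sqrt (10 * (T : ℝ)) ^ 2 = 10 * T := Real.sq_sqrt (by positivity)
  have hRpos : 0 < R := lt_of_le_of_lt (by positivity) hcon
  have hR2 : 40 * (T : ℝ) < R ^ 2 := by nlinarith
  have hT5 : (5 : ℝ) ≤ (T : ℝ) := by exact_mod_cast hT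
  have hR14 : 14 < R := by nlinarith
  classical
  set P : ℕ → Prop := fun u => S.rho u ≤ R / 2 with hP
  have hP0 : P 0 := by
    have : S.rho 0 = 0 := by simp [rho, S.hA0, S.hB0]
    simp only [hP, this]
    linarith
  set s := Nat.findGreatest P T with hs
  have hsle : s ≤ T := Nat.findGreatest_le T
  have hPs : P s := Nat.findGreatest_spec (Nat.zero_le T) hP0
  have hnotP : ∀ u, s < u → u ≤ T → R / 2 < S.rho u := by
    intro u hu hu'
    have := Nat.findGreatest_is_greatest hu hu'
    simpa [hP] using not_le.mp (by simpa [hP] using this)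
  have hsT : s < T := by
    rcases lt_or_eq_of_le hsle with h | h
    · exact h
    · exfalso
      have : S.rho s ≤ R / 2 := hPs
      rw [h] at this
      linarith
  have hrs1 : S.rho (s + 1) ≤ R / 2 + 2 := by
    have h1 := S.rho_step s
    have h2 : S.rho s ≤ R / 2 := hPs
    linarith
  set K := (Finset.Ico (s + 1) T).filter (fun u => S.Cr u) with hK
  -- counting claim
  have hclaim : ∀ n : ℕ, S.rho (s + 1 + n) ≤
      S.rho (s + 1) + ∑ u ∈ Finset.Ico (s + 1) (s + 1 + n), (if S.Cr u then (2 : ℝ) else 0) := by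
    intro n
    induction n with
    | zero => simp
    | succ n ih =>
      have hsum := Finset.sum_Ico_succ_top (show s + 1 ≤ s + 1 + n by omega)
        (fun u => if S.Cr u then (2 : ℝ) else 0)
      have he : s + 1 + (n + 1) = (s + 1 + n) + 1 := rfl
      rw [he, hsum]
      by_cases hc : S.Cr (s + 1 + n)
      · have := S.rho_step (s + 1 + n)
        rw [if_pos hc]
        linarith
      · have := S.rho_eq_of_not_cr hc
        rw [if_neg hc]
        linarith
  have hsumcard : ∑ u ∈ Finset.Ico (s + 1) T, (if S.Cr u then (2 : ℝ) else 0) = 2 * K.card := by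
    rw [hK, ← Finset.sum_filter]
    simp [mul_comm]
  have hcount : R ≤ R / 2 + 2 + 2 * K.card := by
    have := hclaim (T - (s + 1))
    rw [show s + 1 + (T - (s + 1)) = T by omega] at this
    rw [hsumcard] at this
    linarith
  have hcard : (R / 4 - 1 : ℝ) ≤ K.card := by linarith
  have hKne : K.Nonempty := by
    rw [← Finset.card_pos]
    by_contra hc
    push_neg at hc
    have h0 : K.card = 0 := by omega
    rw [h0] at hcard
    norm_num at hcard
    linarith
  have hgapK : ∀ u ∈ K, ∀ v ∈ K, u < v → R / 2 - 3 ≤ (v : ℝ) - u := by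
    intro u hu v hv huv
    have hu' := Finset.mem_filter.mp hu
    have hv' := Finset.mem_filter.mp hv
    have huIco := Finset.mem_Ico.mp hu'.1
    have hgapuv := S.gap u v huv hu'.2 hv'.2
    have hru : R / 2 < S.rho (u + 1) := hnotP (u + 1) (by omega) (by omega)
    linarith
  have hG0 : (0:ℝ) ≤ R / 2 - 3 := by linarith
  have hmaxmin := gapSum K.card K (R / 2 - 3) hG0 rfl hgapK hKne
  have hmaxK := Finset.mem_Ico.mp (Finset.mem_filter.mp (K.max'_mem hKne)).1
  have hminK := Finset.mem_Ico.mp (Finset.mem_filter.mp (K.min'_mem hKne)).1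
  have hmaxle : ((K.max' hKne : ℕ) : ℝ) ≤ (T : ℝ) - 1 := by
    have h1 : K.max' hKne + 1 ≤ T := hmaxK.2
    have h2 := (Nat.cast_le (α := ℝ)).mpr h1
    push_cast at h2
    linarith
  have hminge : (1 : ℝ) ≤ ((K.min' hKne : ℕ) : ℝ) := by
    have h1 := hminK.1
    have h2 : 1 ≤ K.min' hKne := by omega
    exact_mod_cast h2
  have hprod : ((K.card : ℝ) - 1) * (R / 2 - 3) ≤ (T : ℝ) - 2 := by linarith
  have hmono : (R / 4 - 2) * (R / 2 - 3) ≤ ((K.card : ℝ) - 1) * (R / 2 - 3) :=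
    mul_le_mul_of_nonneg_right (by linarith) hG0
  nlinarith [sq_nonneg (4 * R - 35)]
end Sys

lemma cumul_zero (v : ℝ → ℝ) : cumul v 0 = 0 := intervalIntegral.integral_same

lemma cumul_nonneg {lo hi : ℝ} (hlo : 0 < lo) {v : ℝ → ℝ} (hv : IsDensity lo hi v)
    {x : ℝ} (hx : x ∈ Set.Icc (0:ℝ) 1) : 0 ≤ cumul v x :=
  intervalIntegral.integral_nonneg hx.1
    (fun u hu => le_trans hlo.le (hv.2.1 u ⟨hu.1, le_trans hu.2 hx.2⟩).1)

lemma cumul_le_one {lo hi : ℝ} (hlo : 0 < lo) {v : ℝ → ℝ} (hv : IsDensity lo hi v)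
    {x : ℝ} (hx : x ∈ Set.Icc (0:ℝ) 1) : cumul v x ≤ 1 := by
  have i1 : IntervalIntegrable v volume 0 x := by
    apply hv.1.mono_set
    rw [Set.uIcc_of_le hx.1, Set.uIcc_of_le (zero_le_one)]
    exact Set.Icc_subset_Icc le_rfl hx.2
  have i2 : IntervalIntegrable v volume x 1 := by
    apply hv.1.mono_set
    rw [Set.uIcc_of_le hx.2, Set.uIcc_of_le (zero_le_one)]
    exact Set.Icc_subset_Icc hx.1 le_rfl
  have hsplit : cumul v x + ∫ y in x..1, v y = 1 := by
    rw [cumul, intervalIntegral.integral_add_adjacent_intervals i1 i2]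
    exact hv.2.2
  have h2 : 0 ≤ ∫ y in x..1, v y :=
    intervalIntegral.integral_nonneg hx.2
      (fun u hu => le_trans hlo.le (hv.2.1 u ⟨le_trans hx.1 hu.1, hu.2⟩).1)
  linarith

lemma cumul_one {lo hi : ℝ} {v : ℝ → ℝ} (hv : IsDensity lo hi v) : cumul v 1 = 1 := hv.2.2

lemma alphaFP_zero (b : ℕ → Choice) : alphaFP b 0 = 0 := by simp [alphaFP]

lemma betaFP_zero (vB : ℝ → ℝ) (a : ℕ → ℝ) : betaFP vB a 0 = 0 := by simp [betaFP]

lemma alphaFP_succ (b : ℕ → Choice) (t : ℕ) :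
    alphaFP b (t + 1) = alphaFP b t + (if b (t + 1) = Choice.R then (1:ℝ) else -1) := by
  rw [alphaFP, alphaFP, Finset.sum_Icc_succ_top (by omega : 1 ≤ t + 1)]

lemma betaFP_succ (vB : ℝ → ℝ) (a : ℕ → ℝ) (t : ℕ) :
    betaFP vB a (t + 1) = betaFP vB a t + (2 * cumul vB (a (t + 1)) - 1) := by
  rw [betaFP, betaFP, Finset.sum_Icc_succ_top (by omega : 1 ≤ t + 1)]

lemma alphaFP_int (b : ℕ → Choice) : ∀ t, ∃ n : ℤ, alphaFP b t = (n : ℝ) := by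
  intro t
  induction t with
  | zero => exact ⟨0, by simp [alphaFP_zero]⟩
  | succ t ih =>
    obtain ⟨n, hn⟩ := ih
    by_cases h : b (t + 1) = Choice.R
    · exact ⟨n + 1, by rw [alphaFP_succ, hn, if_pos h]; push_cast; ring⟩
    · exact ⟨n - 1, by rw [alphaFP_succ, hn, if_neg h]; push_cast; ring⟩

end RadiusAux

/-- Under fictitious play, for every `T ≥ 5` the radius satisfies
`ρ_T ≤ 2√(10T)`. -/
theorem radius_upper_bound
    (δ Δ : ℝ) (hδ : 0 < δ) (hδΔ : δ ≤ Δ)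
    (vA vB : ℝ → ℝ) (hA : IsDensity δ Δ vA) (hB : IsDensity δ Δ vB)
    (a : ℕ → ℝ) (b : ℕ → Choice)
    (ha : ∀ t : ℕ, 1 ≤ t → a t ∈ Set.Icc (0:ℝ) 1)
    (hfp : IsFictitiousPlay vB a b)
    (T : ℕ) (hT : 5 ≤ T) :
    rhoFP vB a b T ≤ 2 * Real.sqrt (10 * T) := by
  have hLR : (Choice.L = Choice.R) = False := by simp
  set S : RadiusAux.Sys :=
    { A := alphaFP b
      B := betaFP vB a
      hA0 := RadiusAux.alphaFP_zero b
      hB0 := RadiusAux.betaFP_zero vB a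
      hint := RadiusAux.alphaFP_int b
      hstepA := by
        intro t
        rw [RadiusAux.alphaFP_succ]
        by_cases h : b (t + 1) = Choice.R
        · left; rw [if_pos h]
        · right; rw [if_neg h]; ring
      hstepB := by
        intro t
        rw [RadiusAux.betaFP_succ]
        have h1 := RadiusAux.cumul_nonneg hδ hB (ha (t + 1) (by omega))
        have h2 := RadiusAux.cumul_le_one hδ hB (ha (t + 1) (by omega))
        rw [abs_le]
        constructor <;> [linarith; linarith]
      hp := by
        intro t h
        have h1 := (hfp t).1 h
        rw [RadiusAux.betaFP_succ, h1, RadiusAux.cumul_one hB]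
        ring
      hn := by
        intro t h
        have h1 := (hfp t).2.1 h
        rw [RadiusAux.betaFP_succ, h1, RadiusAux.cumul_zero]
        ring
      hbp := by
        intro t h
        have h1 := (hfp t).2.2.1 h
        rw [RadiusAux.alphaFP_succ, h1, if_neg (by simp)]
        ring
      hbn := by
        intro t h
        have h1 := (hfp t).2.2.2 h
        rw [RadiusAux.alphaFP_succ, h1, if_pos rfl] } with hS
  exact S.main T hT
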